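/- Let C be a noncanonical system with minimum counterexample w. Then in the lexicographically smallest optimal representation of w in C, the number of coins of value c₁ = 1 used is zero. -/

import Mathlib

open Finset

/-- `x` is a representation of value `v` in the coin system `c 1, …, c n`. -/
def IsRepr (n : ℕ) (c : ℕ → ℕ) (v : ℕ) (x : ℕ → ℕ) : Prop :=
  ∑ i ∈ Finset.Icc 1 n, c i * x i = v

/-- Minimum number of coins over all representations of `v`. -/
noncomputable def opt (n : ℕ) (c : ℕ → ℕ) (v : ℕ) : ℕ :=
  sInf {k | ∃ x : ℕ → ℕ, IsRepr n c v x ∧ ∑ i ∈ Finset.Icc 1 n, x i = k}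

/-- Number of coins used by the greedy algorithm to pay `v`. -/
def grd (n : ℕ) (c : ℕ → ℕ) (v : ℕ) : ℕ :=
  if hv : v = 0 then 0
  else
    let m := ((Finset.Icc 1 n).filter (fun i => c i ≤ v)).sup c
    if hm : 0 < m then grd n c (v - m) + 1 else 0
termination_by v
decreasing_by omega

/-- The system is canonical: greedy is optimal for every positive value. -/
def Canonical (n : ℕ) (c : ℕ → ℕ) : Prop :=
  ∀ v, 0 < v → opt n c v = grd n c v

/-- `w` is a counterexample to the system. -/
def IsCex (n : ℕ) (c : ℕ → ℕ) (w : ℕ) : Prop :=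
  0 < w ∧ opt n c w < grd n c w

/-- `w` is the minimum counterexample to the system. -/
def MinCex (n : ℕ) (c : ℕ → ℕ) (w : ℕ) : Prop :=
  IsCex n c w ∧ ∀ u, IsCex n c u → w ≤ u

/-- A (currency) system: first coin is `1` and coins strictly increase. -/
def IsSystem (n : ℕ) (c : ℕ → ℕ) : Prop :=
  c 1 = 1 ∧ StrictMonoOn c (Set.Icc 1 n)

/-- `x` is an optimal representation of `w` in the system. -/
def OptRepr (n : ℕ) (c : ℕ → ℕ) (w : ℕ) (x : ℕ → ℕ) : Prop :=
  IsRepr n c w x ∧ ∑ i ∈ Finset.Icc 1 n, x i = opt n c w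

/-- `x` is lexicographically smaller than `y` (over indices `1, …, n`). -/
def LexLt (n : ℕ) (x y : ℕ → ℕ) : Prop :=
  ∃ k ∈ Finset.Icc 1 n, x k < y k ∧ ∀ i ∈ Finset.Icc 1 n, i < k → x i = y i

-- auxiliary lemmas
section Aux

variable (n : ℕ) (c : ℕ → ℕ)

lemma grd_zero' : grd n c 0 = 0 := by rw [grd]; simp

lemma opt_zero' : opt n c 0 = 0 :=
  le_antisymm (Nat.sInf_le ⟨fun _ => 0, by simp [IsRepr], by simp⟩) (Nat.zero_le _)

lemma one_mem_Icc (hn : 0 < n) : 1 ∈ Finset.Icc 1 n := by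
  simp [Finset.mem_Icc]; omega

lemma sup_spec (hn : 0 < n) (h1 : c 1 = 1) {v : ℕ} (hv : 0 < v) :
    0 < ((Finset.Icc 1 n).filter (fun i => c i ≤ v)).sup c ∧
    ((Finset.Icc 1 n).filter (fun i => c i ≤ v)).sup c ≤ v ∧
    ∃ j ∈ Finset.Icc 1 n, c j = ((Finset.Icc 1 n).filter (fun i => c i ≤ v)).sup c := by
  have h1mem : (1 : ℕ) ∈ (Finset.Icc 1 n).filter (fun i => c i ≤ v) := by
    simp [Finset.mem_filter, Finset.mem_Icc, h1]; omega
  have hne : ((Finset.Icc 1 n).filter (fun i => c i ≤ v)).Nonempty := ⟨1, h1mem⟩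
  obtain ⟨j, hj, hje⟩ := Finset.exists_mem_eq_sup _ hne c
  have hjf := Finset.mem_filter.mp hj
  refine ⟨?_, ?_, j, hjf.1, hje.symm⟩
  · calc 0 < c 1 := by omega
      _ ≤ _ := Finset.le_sup h1mem
  · rw [hje]; exact hjf.2

lemma grd_pos_eq (hn : 0 < n) (h1 : c 1 = 1) {v : ℕ} (hv : 0 < v) :
    grd n c v = grd n c (v - ((Finset.Icc 1 n).filter (fun i => c i ≤ v)).sup c) + 1 := by
  obtain ⟨hm, _, _⟩ := sup_spec n c hn h1 hv
  rw [grd]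
  have _hv0 := Nat.pos_iff_ne_zero.mp hv
  rw [dif_neg (by omega)]
  rw [dif_pos hm]

lemma exists_grd_repr (hn : 0 < n) (h1 : c 1 = 1) :
    ∀ v, ∃ x : ℕ → ℕ, IsRepr n c v x ∧ ∑ i ∈ Finset.Icc 1 n, x i = grd n c v := by
  intro v
  induction v using Nat.strong_induction_on with
  | _ v ih =>
    rcases Nat.eq_zero_or_pos v with rfl | hv
    · exact ⟨fun _ => 0, by simp [IsRepr], by simp [grd_zero']⟩
    · obtain ⟨hm, hmv, j, hj, hcj⟩ := sup_spec n c hn h1 hv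
      set m := ((Finset.Icc 1 n).filter (fun i => c i ≤ v)).sup c with hmdef
      obtain ⟨y, hyr, hys⟩ := ih (v - m) (by omega)
      refine ⟨fun i => y i + if i = j then 1 else 0, ?_, ?_⟩
      · unfold IsRepr at hyr ⊢
        simp only [mul_add, Finset.sum_add_distrib, hyr, mul_ite, mul_one, mul_zero,
          Finset.sum_ite_eq', hj, if_pos, hcj]
        omega
      · rw [Finset.sum_add_distrib, hys, Finset.sum_ite_eq' _ j, if_pos hj,
          grd_pos_eq n c hn h1 hv]

lemma exists_opt_repr (hn : 0 < n) (h1 : c 1 = 1) (v : ℕ) :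
    ∃ x : ℕ → ℕ, IsRepr n c v x ∧ ∑ i ∈ Finset.Icc 1 n, x i = opt n c v := by
  have hne : {k | ∃ x : ℕ → ℕ, IsRepr n c v x ∧ ∑ i ∈ Finset.Icc 1 n, x i = k}.Nonempty := by
    obtain ⟨y, hy, _⟩ := exists_grd_repr n c hn h1 v
    exact ⟨_, y, hy, rfl⟩
  exact Nat.sInf_mem hne

lemma opt_le_grd (hn : 0 < n) (h1 : c 1 = 1) (v : ℕ) : opt n c v ≤ grd n c v := by
  obtain ⟨y, hy, hs⟩ := exists_grd_repr n c hn h1 v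
  exact Nat.sInf_le ⟨y, hy, hs⟩

lemma grd_lipschitz (hn : 0 < n) (h1 : c 1 = 1) :
    ∀ v, 0 < v → grd n c v ≤ grd n c (v - 1) + 1 := by
  intro v
  induction v using Nat.strong_induction_on with
  | _ v ih =>
    intro hv
    obtain ⟨hm, hmv, j, hj, hcj⟩ := sup_spec n c hn h1 hv
    set m := ((Finset.Icc 1 n).filter (fun i => c i ≤ v)).sup c with hmdef
    rcases eq_or_lt_of_le hmv with heq | hlt
    · rw [grd_pos_eq n c hn h1 hv, ← hmdef, ← heq, Nat.sub_self, grd_zero']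
      omega
    · -- m ≤ v - 1, so the greedy coin for v-1 is also m
      have hv1 : 0 < v - 1 := by omega
      have hsupeq : ((Finset.Icc 1 n).filter (fun i => c i ≤ v - 1)).sup c = m := by
        apply le_antisymm
        · apply Finset.sup_le
          intro i hi
          have hif := Finset.mem_filter.mp hi
          exact Finset.le_sup (Finset.mem_filter.mpr ⟨hif.1, by omega⟩)
        · have hjm : j ∈ (Finset.Icc 1 n).filter (fun i => c i ≤ v - 1) :=
            Finset.mem_filter.mpr ⟨hj, show c j ≤ v - 1 by omega⟩
          calc m = c j := hcj.symm
            _ ≤ _ := Finset.le_sup hjm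
      rw [grd_pos_eq n c hn h1 hv, ← hmdef, grd_pos_eq n c hn h1 hv1, hsupeq]
      have hrec : grd n c (v - m) ≤ grd n c (v - m - 1) + 1 := ih (v - m) (by omega) (by omega)
      have : v - 1 - m = v - m - 1 := by omega
      rw [this]
      omega

end Aux


/-- In the lexicographically smallest optimal representation of the minimum
counterexample, no coin of value `1` is used. -/
theorem no_unit_coin_in_lex_min_opt (n : ℕ) (c : ℕ → ℕ) (hn : 0 < n)
    (hsys : IsSystem n c) (hnc : ¬ Canonical n c) (w : ℕ) (hw : MinCex n c w)
    (x : ℕ → ℕ) (hx : OptRepr n c w x)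
    (hlex : ∀ y : ℕ → ℕ, OptRepr n c w y → ¬ LexLt n y x) :
    x 1 = 0 := by
  obtain ⟨h1, hmono⟩ := hsys
  by_contra hne0
  have hx1 : 0 < x 1 := Nat.pos_of_ne_zero hne0
  obtain ⟨⟨hw0, hwlt⟩, hmin⟩ := hw
  obtain ⟨hxr, hxs⟩ := hx
  -- opt (w-1) + 1 ≤ opt w
  have h3 : opt n c (w - 1) + 1 ≤ opt n c w := by
    set z : ℕ → ℕ := fun i => x i - if i = 1 then 1 else 0 with hz
    have hxz : ∀ i, x i = z i + (if i = 1 then 1 else 0) := by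
      intro i
      rcases eq_or_ne i 1 with rfl | hi
      · simp only [hz, reduceIte]; omega
      · simp [hz, hi]
    have hsum : ∑ i ∈ Finset.Icc 1 n, c i * x i
        = ∑ i ∈ Finset.Icc 1 n, c i * z i + c 1 := by
      rw [Finset.sum_congr rfl (fun i _ => by rw [hxz i])]
      simp only [mul_add, Finset.sum_add_distrib, mul_ite, mul_one, mul_zero,
        Finset.sum_ite_eq', if_pos (one_mem_Icc n hn)]
    have hzr : IsRepr n c (w - 1) z := by
      unfold IsRepr at hxr ⊢
      omega
    have hsum2 : ∑ i ∈ Finset.Icc 1 n, x i = ∑ i ∈ Finset.Icc 1 n, z i + 1 := by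
      rw [Finset.sum_congr rfl (fun i _ => by rw [hxz i])]
      simp only [Finset.sum_add_distrib, Finset.sum_ite_eq', if_pos (one_mem_Icc n hn)]
    have hle : opt n c (w - 1) ≤ ∑ i ∈ Finset.Icc 1 n, z i := Nat.sInf_le ⟨z, hzr, rfl⟩
    omega
  -- opt w ≤ opt (w-1) + 1
  have h2 : opt n c w ≤ opt n c (w - 1) + 1 := by
    obtain ⟨y, hyr, hys⟩ := exists_opt_repr n c hn h1 (w - 1)
    set z : ℕ → ℕ := fun i => y i + if i = 1 then 1 else 0 with hz
    have hzr : IsRepr n c w z := by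
      unfold IsRepr at hyr ⊢
      simp only [hz, mul_add, Finset.sum_add_distrib, hyr, mul_ite, mul_one, mul_zero,
        Finset.sum_ite_eq', if_pos (one_mem_Icc n hn)]
      omega
    have hzs : ∑ i ∈ Finset.Icc 1 n, z i = opt n c (w - 1) + 1 := by
      simp only [hz, Finset.sum_add_distrib, hys,
        Finset.sum_ite_eq', if_pos (one_mem_Icc n hn)]
    exact Nat.sInf_le ⟨z, hzr, hzs⟩
  -- w - 1 is not a counterexample
  have heq : opt n c (w - 1) = grd n c (w - 1) := by
    rcases Nat.eq_zero_or_pos (w - 1) with h0 | hp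
    · rw [h0, opt_zero', grd_zero']
    · have hle := opt_le_grd n c hn h1 (w - 1)
      by_contra hne
      have hcx : IsCex n c (w - 1) := ⟨hp, lt_of_le_of_ne hle hne⟩
      have := hmin _ hcx
      omega
  have h4 := grd_lipschitz n c hn h1 w hw0
  omega
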